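/- Let (W_j, Θ_j) be a gf-orthonormal basis for H with respect to {v_j}, let Λ = (W_j, Λ_j, v_j) be a gf-Riesz basis for H, and let V : H → H be the bounded operator V f = Σ_{j∈J} v_j² π_{W_j} Λ_j* Θ_j π_{W_j} f. Then V is invertible (bijective with bounded inverse). -/

import Mathlib

open scoped InnerProductSpace
open ContinuousLinearMap

/-- The orthogonal projection of `H` onto the closed subspace `W j`, as a map `H →L[ℂ] H`. -/
noncomputable def gfProj {H : Type*} [NormedAddCommGroup H] [InnerProductSpace ℂ H]
    {J : Type*} (W : J → Submodule ℂ H) [∀ j, CompleteSpace (W j)] (j : J) : H →L[ℂ] H :=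
  (W j).subtypeL.comp ((W j).orthogonalProjectionOnto)

/-- if `(W_j, Θ_j)` is a gf-orthonormal basis, `Λ = (W_j, Λ_j, v_j)` is a
gf-Riesz basis, and `V f = Σ_j v_j² π_{W_j} Λ_j* Θ_j π_{W_j} f`, then `V` is invertible. -/
theorem gf_riesz_basis_operator_invertible
    {H : Type*} [NormedAddCommGroup H] [InnerProductSpace ℂ H] [CompleteSpace H]
    {J : Type*} [Countable J]
    {Hs : J → Type*} [∀ j, NormedAddCommGroup (Hs j)] [∀ j, InnerProductSpace ℂ (Hs j)]
    [∀ j, CompleteSpace (Hs j)]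
    (W : J → Submodule ℂ H) [∀ j, CompleteSpace (W j)]
    (v : J → ℝ) (hv : ∀ j, 0 < v j)
    (Θ : ∀ j, H →L[ℂ] Hs j) (Λ : ∀ j, H →L[ℂ] Hs j)
    (hΘ_orth_eq : ∀ j (g g' : Hs j),
        ⟪v j • gfProj W j (adjoint (Θ j) g), v j • gfProj W j (adjoint (Θ j) g')⟫_ℂ
          = ⟪g, g'⟫_ℂ)
    (hΘ_orth_ne : ∀ i j, i ≠ j → ∀ (gi : Hs i) (gj : Hs j),
        ⟪v i • gfProj W i (adjoint (Θ i) gi), v j • gfProj W j (adjoint (Θ j) gj)⟫_ℂ = 0)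
    (hΘ_parseval : ∀ f : H,
        HasSum (fun j => (v j) ^ 2 * ‖Θ j (gfProj W j f)‖ ^ 2) (‖f‖ ^ 2))
    (A B : ℝ) (hA : 0 < A) (hAB : A ≤ B)
    (hΛ_complete : (Submodule.span ℂ
        (⋃ j, Set.range fun g : Hs j => gfProj W j (adjoint (Λ j) g))).topologicalClosure
      = ⊤)
    (hΛ_riesz : ∀ (s : Finset J) (g : ∀ j, Hs j),
        A * ∑ j ∈ s, ‖g j‖ ^ 2 ≤ ‖∑ j ∈ s, v j • gfProj W j (adjoint (Λ j) (g j))‖ ^ 2 ∧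
        ‖∑ j ∈ s, v j • gfProj W j (adjoint (Λ j) (g j))‖ ^ 2 ≤ B * ∑ j ∈ s, ‖g j‖ ^ 2)
    (V : H →L[ℂ] H)
    (hV : ∀ f : H,
        HasSum (fun j => ((v j) ^ 2 : ℝ) •
          gfProj W j (adjoint (Λ j) (Θ j (gfProj W j f)))) (V f)) :
    ∃ E : H ≃L[ℂ] H, ∀ f : H, E f = V f := by
  classical
  -- self-adjointness of the projection
  have hPsym : ∀ (j : J) (x y : H), ⟪x, gfProj W j y⟫_ℂ = ⟪gfProj W j x, y⟫_ℂ := by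
    intro j x y
    exact ((W j).starProjection_isSymmetric x y).symm
  -- key adjoint identity
  have key_inner : ∀ (j : J) (g' : Hs j) (h : H),
      ⟪g', v j • Θ j (gfProj W j h)⟫_ℂ
        = ⟪v j • gfProj W j (adjoint (Θ j) g'), h⟫_ℂ := by
    intro j g' h
    rw [← Complex.coe_smul, ← Complex.coe_smul, inner_smul_right, inner_smul_left,
      Complex.conj_ofReal]
    congr 1
    rw [← adjoint_inner_left (Θ j), hPsym]
  -- orthonormality consequences
  have hS_zero : ∀ (j k : J), j ≠ k → ∀ g : Hs k,
      v j • Θ j (gfProj W j (v k • gfProj W k (adjoint (Θ k) g))) = 0 := by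
    intro j k hjk g
    apply ext_inner_left ℂ
    intro g'
    rw [inner_zero_right, key_inner j g' _]
    exact hΘ_orth_ne j k hjk g' g
  have hS_eq : ∀ (k : J) (g : Hs k),
      v k • Θ k (gfProj W k (v k • gfProj W k (adjoint (Θ k) g))) = g := by
    intro k g
    apply ext_inner_left ℂ
    intro g'
    rw [key_inner k g' _]
    exact hΘ_orth_eq k g' g
  -- rewriting of the summand of V
  have hsummand : ∀ (j : J) (h : H),
      ((v j) ^ 2 : ℝ) • gfProj W j (adjoint (Λ j) (Θ j (gfProj W j h)))
        = v j • gfProj W j (adjoint (Λ j) (v j • Θ j (gfProj W j h))) := by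
    intro j h
    rw [← Complex.coe_smul (v j) (Θ j _), map_smul, map_smul, ← Complex.coe_smul,
      ← Complex.coe_smul, smul_smul]
    norm_cast
    rw [sq]
  -- action of V on the Θ-basis vectors
  have hV_S : ∀ (k : J) (g : Hs k),
      V (v k • gfProj W k (adjoint (Θ k) g)) = v k • gfProj W k (adjoint (Λ k) g) := by
    intro k g
    have h1 := hV (v k • gfProj W k (adjoint (Θ k) g))
    have h2 : (fun j => ((v j) ^ 2 : ℝ) •
        gfProj W j (adjoint (Λ j) (Θ j (gfProj W j (v k • gfProj W k (adjoint (Θ k) g))))))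
        = fun j => if j = k then v k • gfProj W k (adjoint (Λ k) g) else 0 := by
      funext j
      rw [hsummand j _]
      by_cases hjk : j = k
      · subst hjk
        rw [hS_eq j g, if_pos rfl]
      · rw [hS_zero j k hjk g, if_neg hjk, map_zero, map_zero, smul_zero]
    rw [h2] at h1
    exact h1.unique (hasSum_ite_eq k _)
  -- lower frame bound for V
  have hlow : ∀ f : H, A * ‖f‖ ^ 2 ≤ ‖V f‖ ^ 2 := by
    intro f
    have t1 : Filter.Tendsto
        (fun s : Finset J => A * ∑ j ∈ s, (v j) ^ 2 * ‖Θ j (gfProj W j f)‖ ^ 2)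
        Filter.atTop (nhds (A * ‖f‖ ^ 2)) := by
      exact Filter.Tendsto.const_mul A (hΘ_parseval f)
    have t2 : Filter.Tendsto
        (fun s : Finset J => ‖∑ j ∈ s, ((v j) ^ 2 : ℝ) •
          gfProj W j (adjoint (Λ j) (Θ j (gfProj W j f)))‖ ^ 2)
        Filter.atTop (nhds (‖V f‖ ^ 2)) := by
      have t2' : Filter.Tendsto
          (fun s : Finset J => ∑ j ∈ s, ((v j) ^ 2 : ℝ) •
            gfProj W j (adjoint (Λ j) (Θ j (gfProj W j f))))
          Filter.atTop (nhds (V f)) := hV f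
      exact (t2'.norm).pow 2
    refine le_of_tendsto_of_tendsto' t1 t2 ?_
    intro s
    have h3 := (hΛ_riesz s (fun j => v j • Θ j (gfProj W j f))).1
    have h4 : ∀ j : J, ‖v j • Θ j (gfProj W j f)‖ ^ 2
        = (v j) ^ 2 * ‖Θ j (gfProj W j f)‖ ^ 2 := by
      intro j
      rw [norm_smul, mul_pow, Real.norm_eq_abs, sq_abs]
    calc A * ∑ j ∈ s, (v j) ^ 2 * ‖Θ j (gfProj W j f)‖ ^ 2
        = A * ∑ j ∈ s, ‖v j • Θ j (gfProj W j f)‖ ^ 2 := by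
          rw [Finset.sum_congr rfl fun j _ => (h4 j).symm]
      _ ≤ ‖∑ j ∈ s, v j • gfProj W j (adjoint (Λ j) (v j • Θ j (gfProj W j f)))‖ ^ 2 := h3
      _ = ‖∑ j ∈ s, ((v j) ^ 2 : ℝ) •
            gfProj W j (adjoint (Λ j) (Θ j (gfProj W j f)))‖ ^ 2 := by
          rw [Finset.sum_congr rfl fun j _ => (hsummand j f).symm]
  have hsA : 0 < Real.sqrt A := Real.sqrt_pos.mpr hA
  have hlow' : ∀ f : H, Real.sqrt A * ‖f‖ ≤ ‖V f‖ := by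
    intro f
    have h1 : Real.sqrt (A * ‖f‖ ^ 2) ≤ Real.sqrt (‖V f‖ ^ 2) := Real.sqrt_le_sqrt (hlow f)
    rwa [Real.sqrt_mul hA.le, Real.sqrt_sq (norm_nonneg _), Real.sqrt_sq (norm_nonneg _)] at h1
  have hanti : AntilipschitzWith (⟨(Real.sqrt A)⁻¹, by positivity⟩ : NNReal) V := by
    apply V.antilipschitz_of_bound
    intro x
    change ‖x‖ ≤ (Real.sqrt A)⁻¹ * ‖V x‖
    rw [inv_mul_eq_div, le_div_iff₀ hsA, mul_comm]
    exact hlow' x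
  -- ker V = ⊥
  have hker : LinearMap.ker (V : H →ₗ[ℂ] H) = ⊥ := LinearMap.ker_eq_bot.mpr hanti.injective
  -- range V closed
  have hclosed : IsClosed ((LinearMap.range (V : H →ₗ[ℂ] H) : Submodule ℂ H) : Set H) := by
    have he : ((LinearMap.range (V : H →ₗ[ℂ] H) : Submodule ℂ H) : Set H) = Set.range V := by
      ext x
      simp [LinearMap.mem_range, Set.mem_range]
    rw [he]
    exact hanti.isClosed_range V.uniformContinuous
  -- range V dense
  have hdense : (LinearMap.range (V : H →ₗ[ℂ] H) : Submodule ℂ H).topologicalClosure = ⊤ := by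
    rw [Submodule.topologicalClosure_eq_top_iff, Submodule.eq_bot_iff]
    intro f hf
    have h0 : ∀ (k : J) (g : Hs k), ⟪f, gfProj W k (adjoint (Λ k) g)⟫_ℂ = 0 := by
      intro k g
      have h1 : ⟪V (v k • gfProj W k (adjoint (Θ k) g)), f⟫_ℂ = 0 :=
        (Submodule.mem_orthogonal _ f).mp hf _ (LinearMap.mem_range_self _ _)
      rw [hV_S k g, ← Complex.coe_smul, inner_smul_left, Complex.conj_ofReal] at h1
      have hvk : ((v k : ℂ)) ≠ 0 := by
        exact_mod_cast (hv k).ne'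
      have h2 : ⟪gfProj W k (adjoint (Λ k) g), f⟫_ℂ = 0 :=
        (mul_eq_zero.mp h1).resolve_left hvk
      rw [← inner_conj_symm, h2, map_zero]
    have hle : Submodule.span ℂ
        (⋃ j, Set.range fun g : Hs j => gfProj W j (adjoint (Λ j) g))
        ≤ LinearMap.ker (innerSL ℂ f : H →ₗ[ℂ] ℂ) := by
      rw [Submodule.span_le]
      rintro x hx
      simp only [Set.mem_iUnion, Set.mem_range] at hx
      obtain ⟨j, g, rfl⟩ := hx
      simpa [LinearMap.mem_ker] using h0 j g
    have htop : (⊤ : Submodule ℂ H) ≤ LinearMap.ker (innerSL ℂ f : H →ₗ[ℂ] ℂ) := by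
      rw [← hΛ_complete]
      exact Submodule.topologicalClosure_minimal _ hle (isClosed_ker _)
    have hff : ⟪f, f⟫_ℂ = 0 := htop (Submodule.mem_top)
    exact inner_self_eq_zero.mp hff
  have hrange : LinearMap.range (V : H →ₗ[ℂ] H) = ⊤ := by
    rw [← hclosed.submodule_topologicalClosure_eq]
    exact hdense
  exact ⟨ContinuousLinearEquiv.ofBijective V hker hrange, fun f => rfl⟩
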